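/- Let $(s_n)$ be the summing basis of $c_0$, i.e., $s_n = \sum_{i=1}^n e_i$ where $(e_i)$ is the canonical basis. Define $f_k : [\mathbb N]^{\le k} \to c_0$ by $f_k(n_1,\ldots,n_j) = \sum_{i=1}^j s_{n_i}$. Then for all $\overline n, \overline m \in [\mathbb N]^{\le k}$, $\tfrac12 d_{\mathbb K}(\overline n, \overline m) \le \|f_k(\overline n) - f_k(\overline m)\|_\infty \le d_{\mathbb K}(\overline n, \overline m)$. -/

import Mathlib

/-- Kalton's interlaced distance on finite subsets of `ℕ`. -/
noncomputable def dK (A B : Finset ℕ) : ℕ :=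
  sSup {d : ℕ | ∃ a b : ℕ,
    d = (((A ∩ Finset.Icc a b).card : ℤ) - ((B ∩ Finset.Icc a b).card : ℤ)).natAbs}

/-- The `i`-th coordinate of `f_k(A) = ∑_{n ∈ A} s_n ∈ c₀`, where `s_n = e_0 + ⋯ + e_n`
is the summing basis: this coordinate equals `#{n ∈ A : i ≤ n}`. -/
noncomputable def fval (A : Finset ℕ) (i : ℕ) : ℝ := ((A.filter fun n => i ≤ n).card : ℝ)

lemma filter_ge_card_split (A : Finset ℕ) {a b : ℕ} (hab : a ≤ b) :
    ((A.filter fun n => a ≤ n).card : ℤ)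
      = ((A ∩ Finset.Icc a b).card : ℤ) + ((A.filter fun n => b + 1 ≤ n).card : ℤ) := by
  have h1 : A ∩ Finset.Icc a b = (A.filter fun n => a ≤ n).filter (fun n => n ≤ b) := by
    ext n
    simp only [Finset.mem_inter, Finset.mem_Icc, Finset.mem_filter]
    tauto
  have h2 : (A.filter fun n => b + 1 ≤ n)
      = (A.filter fun n => a ≤ n).filter (fun n => ¬ n ≤ b) := by
    ext n
    simp only [Finset.mem_filter, not_le]
    constructor
    · rintro ⟨hn, h⟩; exact ⟨⟨hn, by omega⟩, by omega⟩
    · rintro ⟨⟨hn, _⟩, h⟩; exact ⟨hn, by omega⟩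
  have h3 := Finset.card_filter_add_card_filter_not
      (s := A.filter fun n => a ≤ n) (p := fun n => n ≤ b)
  rw [h1, h2]
  push_cast [← h3]
  ring

lemma fval_eq_inter_card (A : Finset ℕ) {M i b : ℕ} (hM : ∀ n ∈ A, n ≤ M)
    (hib : i ≤ b) (hMb : M ≤ b) :
    fval A i = ((A ∩ Finset.Icc i b).card : ℝ) := by
  have hsplit := filter_ge_card_split A hib
  have hempty : (A.filter fun n => b + 1 ≤ n) = ∅ := by
    rw [Finset.filter_eq_empty_iff]
    intro n hn
    have := hM n hn
    omega
  rw [hempty] at hsplit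
  simp only [Finset.card_empty, Nat.cast_zero, add_zero] at hsplit
  unfold fval
  exact_mod_cast congrArg (Int.cast : ℤ → ℝ) hsplit

/-- The summing-basis map `f_k : [ℕ]^{≤k} → c₀`, `f_k(n₁,…,n_j) = s_{n₁} + ⋯ + s_{n_j}`,
satisfies `½ d_K(n̄,m̄) ≤ ‖f_k(n̄) - f_k(m̄)‖_∞ ≤ d_K(n̄,m̄)`; here the sup norm of
`f_k(A) - f_k(B)` is `⨆ i, |fval A i - fval B i|`. -/
theorem summing_basis_embedding (k : ℕ) (A B : Finset ℕ) (hA : A.card ≤ k) (hB : B.card ≤ k) :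
    (dK A B : ℝ) / 2 ≤ (⨆ i : ℕ, |fval A i - fval B i|) ∧
      (⨆ i : ℕ, |fval A i - fval B i|) ≤ (dK A B : ℝ) := by
  classical
  set S : Set ℕ := {d : ℕ | ∃ a b : ℕ,
    d = (((A ∩ Finset.Icc a b).card : ℤ) - ((B ∩ Finset.Icc a b).card : ℤ)).natAbs} with hSdef
  have hdK : dK A B = sSup S := rfl
  have hSne : S.Nonempty := ⟨_, 0, 0, rfl⟩
  have hSbdd : BddAbove S := by
    refine ⟨A.card + B.card, fun d hd => ?_⟩
    obtain ⟨a, b, rfl⟩ := hd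
    have hx : (A ∩ Finset.Icc a b).card ≤ A.card :=
      Finset.card_le_card Finset.inter_subset_left
    have hy : (B ∩ Finset.Icc a b).card ≤ B.card :=
      Finset.card_le_card Finset.inter_subset_left
    omega
  have hgbound : ∀ i, |fval A i - fval B i| ≤ ((A.card + B.card : ℕ) : ℝ) := by
    intro i
    have h1 : (0:ℝ) ≤ fval A i := Nat.cast_nonneg _
    have h2 : (0:ℝ) ≤ fval B i := Nat.cast_nonneg _
    have h3 : fval A i ≤ (A.card : ℝ) := by
      exact_mod_cast Nat.cast_le.mpr (Finset.card_filter_le A _)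
    have h4 : fval B i ≤ (B.card : ℝ) := by
      exact_mod_cast Nat.cast_le.mpr (Finset.card_filter_le B _)
    rw [abs_le]
    push_cast
    constructor <;> linarith
  have hbdd : BddAbove (Set.range fun i => |fval A i - fval B i|) :=
    ⟨_, by rintro _ ⟨i, rfl⟩; exact hgbound i⟩
  set M : ℕ := (A ∪ B).sup id with hMdef
  have hMA : ∀ n ∈ A, n ≤ M := fun n hn =>
    Finset.le_sup (f := id) (Finset.mem_union_left _ hn)
  have hMB : ∀ n ∈ B, n ≤ M := fun n hn =>
    Finset.le_sup (f := id) (Finset.mem_union_right _ hn)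
  -- Upper bound
  have hupper : (⨆ i : ℕ, |fval A i - fval B i|) ≤ (dK A B : ℝ) := by
    refine ciSup_le fun i => ?_
    set b := max i M with hb
    have hA' := fval_eq_inter_card A hMA (le_max_left i M) (le_max_right i M)
    have hB' := fval_eq_inter_card B hMB (le_max_left i M) (le_max_right i M)
    have hmem : (((A ∩ Finset.Icc i b).card : ℤ) - ((B ∩ Finset.Icc i b).card : ℤ)).natAbs ∈ S :=
      ⟨i, b, rfl⟩
    have hle : (((A ∩ Finset.Icc i b).card : ℤ) - ((B ∩ Finset.Icc i b).card : ℤ)).natAbs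
        ≤ dK A B := by
      rw [hdK]; exact le_csSup hSbdd hmem
    have heq : |fval A i - fval B i|
        = ((((A ∩ Finset.Icc i b).card : ℤ) - ((B ∩ Finset.Icc i b).card : ℤ)).natAbs : ℝ) := by
      rw [hA', hB', Nat.cast_natAbs]
      push_cast
      ring_nf
      rfl
    rw [heq]
    exact_mod_cast hle
  refine ⟨?_, hupper⟩
  -- Lower bound
  have hmem := Nat.sSup_mem hSne hSbdd
  rw [← hdK] at hmem
  obtain ⟨a, b, hab⟩ := hmem
  by_cases h : a ≤ b
  · have hA1 : ((A ∩ Finset.Icc a b).card : ℝ) = fval A a - fval A (b + 1) := by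
      have := filter_ge_card_split A h
      have : ((A ∩ Finset.Icc a b).card : ℝ)
          = ((A.filter fun n => a ≤ n).card : ℝ) - ((A.filter fun n => b + 1 ≤ n).card : ℝ) := by
        exact_mod_cast congrArg (Int.cast : ℤ → ℝ) (by linarith [filter_ge_card_split A h] : ((A ∩ Finset.Icc a b).card : ℤ) = ((A.filter fun n => a ≤ n).card : ℤ) - ((A.filter fun n => b + 1 ≤ n).card : ℤ))
      rw [this]; rfl
    have hB1 : ((B ∩ Finset.Icc a b).card : ℝ) = fval B a - fval B (b + 1) := by
      have : ((B ∩ Finset.Icc a b).card : ℝ)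
          = ((B.filter fun n => a ≤ n).card : ℝ) - ((B.filter fun n => b + 1 ≤ n).card : ℝ) := by
        exact_mod_cast congrArg (Int.cast : ℤ → ℝ) (by linarith [filter_ge_card_split B h] : ((B ∩ Finset.Icc a b).card : ℤ) = ((B.filter fun n => a ≤ n).card : ℤ) - ((B.filter fun n => b + 1 ≤ n).card : ℤ))
      rw [this]; rfl
    have hdr : (dK A B : ℝ)
        = |((A ∩ Finset.Icc a b).card : ℝ) - ((B ∩ Finset.Icc a b).card : ℝ)| := by
      rw [hab, Nat.cast_natAbs]
      push_cast
      ring_nf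
    have h1 : |fval A a - fval B a| ≤ ⨆ i : ℕ, |fval A i - fval B i| :=
      le_ciSup hbdd a
    have h2 : |fval A (b+1) - fval B (b+1)| ≤ ⨆ i : ℕ, |fval A i - fval B i| :=
      le_ciSup hbdd (b+1)
    have habs : |((A ∩ Finset.Icc a b).card : ℝ) - ((B ∩ Finset.Icc a b).card : ℝ)|
        ≤ |fval A a - fval B a| + |fval A (b+1) - fval B (b+1)| := by
      rw [hA1, hB1]
      have := abs_sub (fval A a - fval B a) (fval A (b+1) - fval B (b+1))
      calc |(fval A a - fval A (b+1)) - (fval B a - fval B (b+1))|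
          = |(fval A a - fval B a) - (fval A (b+1) - fval B (b+1))| := by ring_nf
        _ ≤ |fval A a - fval B a| + |fval A (b+1) - fval B (b+1)| := abs_sub _ _
    rw [hdr]
    linarith
  · have hIcc : Finset.Icc a b = ∅ := Finset.Icc_eq_empty h
    have : dK A B = 0 := by
      rw [hab, hIcc]
      simp
    rw [this]
    have h0 : (0:ℝ) ≤ ⨆ i : ℕ, |fval A i - fval B i| :=
      le_trans (abs_nonneg _) (le_ciSup hbdd 0)
    simpa using h0
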